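/- Let a > 0 and let γ : [0, L] → ℂ be a C² unit-speed curve contained in the closed disk D_a = {z : |z| ≤ a} whose curvature satisfies |γ''(t)| < 1/a for all t. If γ passes through points distinct from its endpoints, then there is at most one parameter t₀ at which |γ(t₀)| attains the minimum dist(0, γ) — i.e., the closest point of γ to the origin is unique. -/

import Mathlib

open Real Set

private lemma stmt_9_aux (a L : ℝ) (ha : 0 < a) (γ : ℝ → ℂ)
    (hsm : ContDiffOn ℝ 2 γ (Icc 0 L))
    (hunit : ∀ t ∈ Icc 0 L, ‖deriv γ t‖ = 1)
    (hcurv : ∀ t ∈ Icc 0 L, ‖deriv (deriv γ) t‖ < 1 / a)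
    (hdisk : ∀ t ∈ Icc 0 L, ‖γ t‖ ≤ a)
    (t₁ t₂ : ℝ) (ht₁ : t₁ ∈ Ioo 0 L) (ht₂ : t₂ ∈ Ioo 0 L)
    (hmin₁ : IsMinOn (fun t => ‖γ t‖) (Icc 0 L) t₁)
    (hmin₂ : IsMinOn (fun t => ‖γ t‖) (Icc 0 L) t₂)
    (hlt : t₁ < t₂) : False := by
  -- γ is differentiable at every point of Icc 0 L (else deriv would be 0, norm ≠ 1)
  have hdiff : ∀ t ∈ Icc 0 L, HasDerivAt γ (deriv γ t) t := by
    intro t ht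
    rw [hasDerivAt_deriv_iff]
    by_contra h
    have h0 := deriv_zero_of_not_differentiableAt h
    have := hunit t ht
    rw [h0] at this
    simp at this
  -- the first-variation function
  set g1 : ℝ → ℝ := fun t => inner ℝ (γ t) (deriv γ t) with hg1def
  -- derivative of g1 at interior points
  have hg1deriv : ∀ t ∈ Ioo 0 L,
      HasDerivAt g1 (1 + inner ℝ (γ t) (deriv (deriv γ) t)) t := by
    intro t ht
    have hmem : Icc (0:ℝ) L ∈ nhds t := Icc_mem_nhds ht.1 ht.2
    have h2 : ContDiffAt ℝ 2 γ t := hsm.contDiffAt hmem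
    have hfd : ContDiffAt ℝ 1 (fderiv ℝ γ) t := h2.fderiv_right (by norm_num)
    have hdf : DifferentiableAt ℝ (fderiv ℝ γ) t := hfd.differentiableAt (by norm_num)
    have hdd : DifferentiableAt ℝ (deriv γ) t := by
      have : DifferentiableAt ℝ (fun x => fderiv ℝ γ x 1) t :=
        hdf.clm_apply (differentiableAt_const _)
      exact this
    have h' := ((hdiff t (Ioo_subset_Icc_self ht)).inner ℝ hdd.hasDerivAt)
    have hone : (inner ℝ (deriv γ t) (deriv γ t) : ℝ) = 1 := by
      rw [real_inner_self_eq_norm_sq, hunit t (Ioo_subset_Icc_self ht)]; norm_num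
    have : (inner ℝ (γ t) (deriv (deriv γ) t) : ℝ) + inner ℝ (deriv γ t) (deriv γ t)
        = 1 + inner ℝ (γ t) (deriv (deriv γ) t) := by rw [hone]; ring
    rw [← this]
    exact h'
  -- g1 vanishes at interior minimizers
  have hzero : ∀ t ∈ Ioo 0 L,
      IsMinOn (fun t => ‖γ t‖) (Icc 0 L) t → g1 t = 0 := by
    intro t ht hmin
    have htI : t ∈ Icc (0:ℝ) L := Ioo_subset_Icc_self ht
    have hmem : Icc (0:ℝ) L ∈ nhds t := Icc_mem_nhds ht.1 ht.2
    -- minimum of the squared norm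
    have hminsq : IsMinOn (fun s => (inner ℝ (γ s) (γ s) : ℝ)) (Icc 0 L) t := by
      intro s hs
      have h1 : ‖γ t‖ ≤ ‖γ s‖ := hmin hs
      simp only [mem_setOf_eq, real_inner_self_eq_norm_sq]
      exact pow_le_pow_left₀ (norm_nonneg _) h1 2
    have hloc : IsLocalMin (fun s => (inner ℝ (γ s) (γ s) : ℝ)) t :=
      hminsq.isLocalMin hmem
    have hder : HasDerivAt (fun s => (inner ℝ (γ s) (γ s) : ℝ)) (2 * g1 t) t := by
      have h' := (hdiff t htI).inner ℝ (hdiff t htI)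
      have : (inner ℝ (γ t) (deriv γ t) : ℝ) + inner ℝ (deriv γ t) (γ t) = 2 * g1 t := by
        rw [real_inner_comm (deriv γ t) (γ t)]; simp [hg1def]; ring
      rw [← this]
      exact h'
    have := hloc.deriv_eq_zero
    rw [hder.deriv] at this
    linarith
  have hz₁ : g1 t₁ = 0 := hzero t₁ ht₁ hmin₁
  have hz₂ : g1 t₂ = 0 := hzero t₂ ht₂ hmin₂
  -- Icc t₁ t₂ ⊆ Ioo 0 L
  have hsub : Icc t₁ t₂ ⊆ Ioo 0 L := fun x hx =>
    ⟨lt_of_lt_of_le ht₁.1 hx.1, lt_of_le_of_lt hx.2 ht₂.2⟩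
  -- g1 is strictly monotone on Icc t₁ t₂
  have hmono : StrictMonoOn g1 (Icc t₁ t₂) := by
    apply strictMonoOn_of_deriv_pos (convex_Icc _ _)
    · intro x hx
      exact ((hg1deriv x (hsub hx)).differentiableAt.continuousAt).continuousWithinAt
    · intro x hx
      rw [interior_Icc] at hx
      have hxI : x ∈ Ioo 0 L := hsub (Ioo_subset_Icc_self hx)
      rw [(hg1deriv x hxI).deriv]
      have hic : x ∈ Icc (0:ℝ) L := Ioo_subset_Icc_self hxI
      have h1 : |(inner ℝ (γ x) (deriv (deriv γ) x) : ℝ)|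
          ≤ ‖γ x‖ * ‖deriv (deriv γ) x‖ := abs_real_inner_le_norm _ _
      have h2 : ‖γ x‖ ≤ a := by
        exact hdisk x hic
      have h3 : ‖deriv (deriv γ) x‖ < 1 / a := hcurv x hic
      have h4 : (0:ℝ) ≤ ‖deriv (deriv γ) x‖ := norm_nonneg _
      have h5 : (0:ℝ) ≤ ‖γ x‖ := norm_nonneg _
      have h6 : a * (1 / a) = 1 := by field_simp
      have h7 : ‖γ x‖ * ‖deriv (deriv γ) x‖ ≤ a * ‖deriv (deriv γ) x‖ :=
        mul_le_mul_of_nonneg_right h2 h4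
      have h8 : a * ‖deriv (deriv γ) x‖ < a * (1 / a) :=
        mul_lt_mul_of_pos_left h3 ha
      have h9 := neg_abs_le (inner ℝ (γ x) (deriv (deriv γ) x) : ℝ)
      linarith
  have := hmono (left_mem_Icc.mpr hlt.le) (right_mem_Icc.mpr hlt.le) hlt
  rw [hz₁, hz₂] at this
  exact lt_irrefl 0 this

/-- A unit-speed `C²` curve in the disk of radius `a` with curvature
everywhere `< 1/a` has at most one interior parameter realizing the minimum
distance to the origin. -/
theorem stmt_9 (a L : ℝ) (ha : 0 < a) (hL : 0 < L) (γ : ℝ → ℂ)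
    (hsm : ContDiffOn ℝ 2 γ (Icc 0 L))
    (hunit : ∀ t ∈ Icc 0 L, ‖deriv γ t‖ = 1)
    (hcurv : ∀ t ∈ Icc 0 L, ‖deriv (deriv γ) t‖ < 1 / a)
    (hdisk : ∀ t ∈ Icc 0 L, ‖γ t‖ ≤ a)
    (t₁ t₂ : ℝ) (ht₁ : t₁ ∈ Ioo 0 L) (ht₂ : t₂ ∈ Ioo 0 L)
    (hmin₁ : IsMinOn (fun t => ‖γ t‖) (Icc 0 L) t₁)
    (hmin₂ : IsMinOn (fun t => ‖γ t‖) (Icc 0 L) t₂) :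
    t₁ = t₂ := by
  rcases lt_trichotomy t₁ t₂ with h | h | h
  · exact absurd (stmt_9_aux a L ha γ hsm hunit hcurv hdisk t₁ t₂ ht₁ ht₂ hmin₁ hmin₂ h) id
  · exact h
  · exact absurd (stmt_9_aux a L ha γ hsm hunit hcurv hdisk t₂ t₁ ht₂ ht₁ hmin₂ hmin₁ h) id
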